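/- Let (a_n)_{n≥1} be a sequence of nonnegative bounded measurable functions on [0,T] and h a nonnegative integrable function on [0,T]. Suppose there exist constants α, β ≥ 0 such that for all n, m ≥ 1 and t ∈ [0,T]: a_{n+1,m}(t) ≤ α ∫_0^t a_{n+1,m}(s) ds + β ∫_0^t a_{n,m}(s) ds + ∫_0^t h(s) ds, where a_{n,m}(t) := sup_{r ≤ t} d_n,m(r) for functions d_{n,m} uniformly bounded on [0,T]. Then limsup_{n→∞} sup_{m≥1} a_{n,m}(t) ≤ e^{(α+β)t} ∫_0^t h(s) ds for all t ∈ [0,T]. -/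

import Mathlib

open Set Filter MeasureTheory

/-- Iterated Gronwall estimate for Picard iterates: if
`a_{n+1,m}(t) ≤ α ∫_0^t a_{n+1,m} + β ∫_0^t a_{n,m} + ∫_0^t h` with
`a_{n,m}(t) = sup_{r ≤ t} d_{n,m}(r)` for uniformly bounded `d_{n,m}`, then
`limsup_n sup_{m≥1} a_{n,m}(t) ≤ e^{(α+β)t} ∫_0^t h`. -/
theorem iterated_gronwall_picard
    (T α β : ℝ) (hT : 0 ≤ T) (hα : 0 ≤ α) (hβ : 0 ≤ β)
    (d : ℕ → ℕ → ℝ → ℝ) (a : ℕ → ℕ → ℝ → ℝ)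
    (hd_nonneg : ∀ n m r, 0 ≤ d n m r)
    (hd_bdd : ∃ M : ℝ, ∀ n m, ∀ r ∈ Icc (0 : ℝ) T, d n m r ≤ M)
    (ha : ∀ n m, ∀ t ∈ Icc (0 : ℝ) T, a n m t = ⨆ r : Icc (0 : ℝ) t, d n m r)
    (ha_meas : ∀ n m, Measurable (a n m))
    (h : ℝ → ℝ) (hh_nonneg : ∀ s ∈ Icc (0 : ℝ) T, 0 ≤ h s)
    (hh_int : IntegrableOn h (Icc 0 T))
    (hrec : ∀ n m : ℕ, 1 ≤ n → 1 ≤ m → ∀ t ∈ Icc (0 : ℝ) T,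
      a (n + 1) m t ≤ α * (∫ s in (0 : ℝ)..t, a (n + 1) m s)
        + β * (∫ s in (0 : ℝ)..t, a n m s) + ∫ s in (0 : ℝ)..t, h s) :
    ∀ t ∈ Icc (0 : ℝ) T,
      limsup (fun n => ⨆ m : {m : ℕ // 1 ≤ m}, a n (m : ℕ) t) atTop
        ≤ Real.exp ((α + β) * t) * ∫ s in (0 : ℝ)..t, h s := by
  obtain ⟨M, hM⟩ := hd_bdd
  set A := α + β with hAdef
  have hA : 0 ≤ A := add_nonneg hα hβ
  have hM0 : 0 ≤ M := (hd_nonneg 1 1 0).trans (hM 1 1 0 ⟨le_refl 0, hT⟩)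
  have ha_le : ∀ n m, ∀ s ∈ Icc (0:ℝ) T, a n m s ≤ M := by
    intro n m s hs
    rw [ha n m s hs]
    have hne : Nonempty (Icc (0:ℝ) s) := ⟨⟨0, le_refl 0, hs.1⟩⟩
    exact ciSup_le fun r => hM n m r ⟨r.2.1, r.2.2.trans hs.2⟩
  have ha_nonneg : ∀ n m, ∀ s ∈ Icc (0:ℝ) T, 0 ≤ a n m s := by
    intro n m s hs
    rw [ha n m s hs]
    have hbdd : BddAbove (Set.range fun r : Icc (0:ℝ) s => d n m r) := by
      refine ⟨M, ?_⟩
      rintro x ⟨r, rfl⟩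
      exact hM n m r ⟨r.2.1, r.2.2.trans hs.2⟩
    exact (hd_nonneg n m 0).trans (le_ciSup hbdd ⟨0, le_refl 0, hs.1⟩)
  -- integrability of a n m on [0,t]
  have hint : ∀ n m, ∀ t ∈ Icc (0:ℝ) T, IntervalIntegrable (a n m) volume 0 t := by
    intro n m t ht
    rw [intervalIntegrable_iff_integrableOn_Icc_of_le ht.1]
    refine Integrable.mono' (g := fun _ => M)
      (integrableOn_const measure_Icc_lt_top.ne)
      ((ha_meas n m).aestronglyMeasurable.restrict) ?_
    filter_upwards [ae_restrict_mem measurableSet_Icc] with s hs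
    have hs' : s ∈ Icc (0:ℝ) T := ⟨hs.1, hs.2.trans ht.2⟩
    rw [Real.norm_eq_abs, abs_of_nonneg (ha_nonneg n m s hs')]
    exact ha_le n m s hs'
  have hh_int' : ∀ t ∈ Icc (0:ℝ) T, IntervalIntegrable h volume 0 t := by
    intro t ht
    rw [intervalIntegrable_iff_integrableOn_Icc_of_le ht.1]
    exact hh_int.mono_set (Icc_subset_Icc_right ht.2)
  have hH0 : ∀ t ∈ Icc (0:ℝ) T, 0 ≤ ∫ s in (0:ℝ)..t, h s := by
    intro t ht
    apply intervalIntegral.integral_nonneg ht.1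
    intro s hs
    exact hh_nonneg s ⟨hs.1, hs.2.trans ht.2⟩
  have hHmono : ∀ s t : ℝ, 0 ≤ s → s ≤ t → t ≤ T →
      (∫ u in (0:ℝ)..s, h u) ≤ ∫ u in (0:ℝ)..t, h u := by
    intro s t hs hst htT
    refine intervalIntegral.integral_mono_interval le_rfl hs hst ?_
      (hh_int' t ⟨hs.trans hst, htT⟩)
    filter_upwards [ae_restrict_mem measurableSet_Ioc] with u hu
    exact hh_nonneg u ⟨hu.1.le, hu.2.trans htT⟩
  set S : ℕ → ℝ → ℝ := fun k t => ∑ j ∈ Finset.range k, A ^ j * t ^ j / (j.factorial : ℝ)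
    with hSdef
  set B : ℕ → ℝ → ℝ := fun k t => A ^ k * t ^ k / (k.factorial : ℝ) with hBdef
  -- elementary integral computation
  have hterm : ∀ (C : ℝ) (j : ℕ) (t : ℝ), (∫ s in (0:ℝ)..t, C * s ^ j / (j.factorial : ℝ))
      = C * t ^ (j+1) / ((j+1).factorial : ℝ) := by
    intro C j t
    rw [intervalIntegral.integral_div, intervalIntegral.integral_const_mul, integral_pow,
      zero_pow (by omega : j + 1 ≠ 0)]
    have hj : ((j.factorial : ℝ)) ≠ 0 := Nat.cast_ne_zero.mpr j.factorial_ne_zero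
    have hj1 : ((j:ℝ) + 1) ≠ 0 := by positivity
    rw [Nat.factorial_succ]
    push_cast
    field_simp
    ring
  -- the key induction
  have claim : ∀ k, ∀ n m : ℕ, 1 ≤ n → 1 ≤ m → ∀ t ∈ Icc (0:ℝ) T,
      a (n + k) m t ≤ (∫ s in (0:ℝ)..t, h s) * S k t + M * B k t := by
    intro k
    induction k with
    | zero =>
      intro n m hn hm t ht
      simpa [hSdef, hBdef] using ha_le n m t ht
    | succ k ih =>
      intro n m hn hm t ht
      set c := ∫ s in (0:ℝ)..t, h s with hc
      have hc0 : 0 ≤ c := hH0 t ht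
      have hS_cont : Continuous fun s : ℝ => S k s := by
        simp only [hSdef]
        exact continuous_finset_sum _ fun j _ =>
          ((continuous_const.mul (continuous_pow j)).div_const _)
      have hB_cont : Continuous fun s : ℝ => B k s := by
        simp only [hBdef]
        exact (continuous_const.mul (continuous_pow k)).div_const _
      have hFcont : Continuous fun s : ℝ => c * S k s + M * B k s :=
        (continuous_const.mul hS_cont).add (continuous_const.mul hB_cont)
      have hbound : ∀ n', 1 ≤ n' → ∀ s ∈ Icc (0:ℝ) t,
          a (n' + k) m s ≤ c * S k s + M * B k s := by
        intro n' hn' s hs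
        have hs' : s ∈ Icc (0:ℝ) T := ⟨hs.1, hs.2.trans ht.2⟩
        refine (ih n' m hn' hm s hs').trans ?_
        have hS0 : 0 ≤ S k s := by
          apply Finset.sum_nonneg
          intro j _
          exact div_nonneg (mul_nonneg (pow_nonneg hA j) (pow_nonneg hs.1 j))
            (Nat.cast_nonneg _)
        exact add_le_add_left
          (mul_le_mul_of_nonneg_right (hHmono s t hs.1 hs.2 ht.2) hS0) _
      have hIa1 : (∫ s in (0:ℝ)..t, a (n + k + 1) m s)
          ≤ ∫ s in (0:ℝ)..t, (c * S k s + M * B k s) := by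
        apply intervalIntegral.integral_mono_on ht.1 (hint _ m t ht)
          (hFcont.intervalIntegrable 0 t)
        intro s hs
        have hnk : n + k + 1 = (n + 1) + k := by ring
        rw [hnk]
        exact hbound (n+1) (by omega) s hs
      have hIa2 : (∫ s in (0:ℝ)..t, a (n + k) m s)
          ≤ ∫ s in (0:ℝ)..t, (c * S k s + M * B k s) := by
        apply intervalIntegral.integral_mono_on ht.1 (hint _ m t ht)
          (hFcont.intervalIntegrable 0 t)
        intro s hs
        exact hbound n hn s hs
      have hrec' := hrec (n + k) m (le_trans hn (Nat.le_add_right n k)) hm t ht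
      have hFint : (∫ s in (0:ℝ)..t, (c * S k s + M * B k s))
          = c * (∑ j ∈ Finset.range k, A ^ j * t ^ (j+1) / ((j+1).factorial : ℝ))
            + M * (A ^ k * t ^ (k+1) / ((k+1).factorial : ℝ)) := by
        rw [intervalIntegral.integral_add (f := fun s => c * S k s) (g := fun s => M * B k s)
          ((continuous_const.mul hS_cont).intervalIntegrable 0 t)
          ((continuous_const.mul hB_cont).intervalIntegrable 0 t)]
        congr 1
        · rw [intervalIntegral.integral_const_mul]
          congr 1
          simp only [hSdef]
          rw [intervalIntegral.integral_finset_sum]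
          · exact Finset.sum_congr rfl fun j _ => hterm (A ^ j) j t
          · intro j _
            exact ((continuous_const.mul (continuous_pow j)).div_const _).intervalIntegrable 0 t
        · rw [intervalIntegral.integral_const_mul]
          congr 1
          simp only [hBdef]
          exact hterm (A ^ k) k t
      have hsum : A * (∑ j ∈ Finset.range k, A ^ j * t ^ (j+1) / ((j+1).factorial : ℝ))
          = ∑ j ∈ Finset.range k, A ^ (j+1) * t ^ (j+1) / ((j+1).factorial : ℝ) := by
        rw [Finset.mul_sum]
        exact Finset.sum_congr rfl fun j _ => by rw [pow_succ']; ring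
      have hSsucc : S (k+1) t
          = (∑ j ∈ Finset.range k, A ^ (j+1) * t ^ (j+1) / ((j+1).factorial : ℝ)) + 1 := by
        simp only [hSdef]
        rw [Finset.sum_range_succ']
        norm_num
      have hBsucc : B (k+1) t = A * (A ^ k * t ^ (k+1) / ((k+1).factorial : ℝ)) := by
        simp only [hBdef]
        rw [pow_succ']
        ring
      calc a (n + (k+1)) m t
          ≤ α * (∫ s in (0:ℝ)..t, a (n + k + 1) m s)
            + β * (∫ s in (0:ℝ)..t, a (n + k) m s) + c := hrec'
        _ ≤ α * (∫ s in (0:ℝ)..t, (c * S k s + M * B k s))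
            + β * (∫ s in (0:ℝ)..t, (c * S k s + M * B k s)) + c := by
            gcongr
        _ = A * (∫ s in (0:ℝ)..t, (c * S k s + M * B k s)) + c := by
            rw [hAdef]; ring
        _ = c * S (k+1) t + M * B (k+1) t := by
            rw [hFint, hSsucc, hBsucc, ← hsum]; ring
  -- conclusion
  intro t ht
  haveI : Nonempty {m : ℕ // 1 ≤ m} := ⟨⟨1, le_refl 1⟩⟩
  set u : ℕ → ℝ := fun n => ⨆ m : {m : ℕ // 1 ≤ m}, a n (m : ℕ) t with hu
  have hulb : ∀ n, 0 ≤ u n := by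
    intro n
    have hb : BddAbove (Set.range fun m : {m : ℕ // 1 ≤ m} => a n (m : ℕ) t) := by
      refine ⟨M, ?_⟩
      rintro x ⟨m, rfl⟩
      exact ha_le n m t ht
    have h1 : a n ((⟨1, le_refl 1⟩ : {m : ℕ // 1 ≤ m}) : ℕ) t ≤ u n :=
      le_ciSup (f := fun m : {m : ℕ // 1 ≤ m} => a n (m : ℕ) t) hb ⟨1, le_refl 1⟩
    exact (ha_nonneg n 1 t ht).trans h1
  have hcb : IsCoboundedUnder (· ≤ ·) atTop u :=
    IsBoundedUnder.isCoboundedUnder_le (isBoundedUnder_of ⟨0, hulb⟩)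
  have hSexp : ∀ k, S k t ≤ Real.exp (A * t) := by
    intro k
    simp only [hSdef]
    calc (∑ j ∈ Finset.range k, A ^ j * t ^ j / (j.factorial : ℝ))
        = ∑ j ∈ Finset.range k, (A * t) ^ j / (j.factorial : ℝ) :=
          Finset.sum_congr rfl fun j _ => by rw [mul_pow]
      _ ≤ Real.exp (A * t) := Real.sum_le_exp_of_nonneg (mul_nonneg hA ht.1) k
  have hstep : ∀ k : ℕ,
      limsup u atTop ≤ Real.exp (A * t) * (∫ s in (0:ℝ)..t, h s) + M * B k t := by
    intro k
    apply limsup_le_of_le hcb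
    filter_upwards [eventually_ge_atTop (k+1)] with n hn
    have hdecomp : n = (n - k) + k := by omega
    calc u n ≤ (∫ s in (0:ℝ)..t, h s) * S k t + M * B k t := by
          apply ciSup_le
          intro m
          have hcl := claim k (n - k) (m : ℕ) (by omega) m.2 t ht
          rwa [← hdecomp] at hcl
      _ ≤ Real.exp (A * t) * (∫ s in (0:ℝ)..t, h s) + M * B k t := by
          refine add_le_add_left ?_ _
          rw [mul_comm (Real.exp (A * t)) _]
          exact mul_le_mul_of_nonneg_left (hSexp k) (hH0 t ht)
  have hB0 : Tendsto (fun k => B k t) atTop (nhds 0) := by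
    have h1 := FloorSemiring.tendsto_pow_div_factorial_atTop (A * t)
    have heq : (fun k => B k t) = fun n => (A * t) ^ n / (n.factorial : ℝ) := by
      funext k
      simp only [hBdef]
      rw [mul_pow]
    rw [heq]
    exact h1
  have hlim : Tendsto (fun k => Real.exp (A * t) * (∫ s in (0:ℝ)..t, h s) + M * B k t)
      atTop (nhds (Real.exp (A * t) * ∫ s in (0:ℝ)..t, h s)) := by
    have h2 : Tendsto (fun k => M * B k t) atTop (nhds (M * 0)) := hB0.const_mul M
    simpa using tendsto_const_nhds.add h2
  exact ge_of_tendsto' hlim hstep
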